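/- Let k be a commutative ring and α ∈ k. In the quotient T = k⟨x,y⟩/(yx − α) of the free associative k-algebra on two generators x, y by the two-sided ideal generated by yx − α, the family of monomials x^i y^j (i, j ≥ 0) is a basis of T as a k-module. -/

import Mathlib

/-- The relation on the free associative algebra `k⟨x,y⟩` identifying `yx`
with `α`; the quotient `RingQuot` is `k⟨x,y⟩/(yx − α)`. -/
def toeplitzRel (k : Type) [CommRing k] (α : k) :
    FreeAlgebra k (Fin 2) → FreeAlgebra k (Fin 2) → Prop :=
  fun a b => a = FreeAlgebra.ι k 1 * FreeAlgebra.ι k 0 ∧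
    b = algebraMap k (FreeAlgebra k (Fin 2)) α

noncomputable section

variable {k : Type} [CommRing k]

abbrev TM (k : Type) [CommRing k] := ((ℕ × ℕ) →₀ k)

def tX : TM k →ₗ[k] TM k := Finsupp.lmapDomain k k (fun p => (p.1 + 1, p.2))

def tY (α : k) : TM k →ₗ[k] TM k :=
  Finsupp.linearCombination k
    (fun p => if p.1 = 0 then Finsupp.single (0, p.2 + 1) 1
      else α • Finsupp.single (p.1 - 1, p.2) 1)

lemma tX_single (p : ℕ × ℕ) (c : k) :
    tX (Finsupp.single p c) = Finsupp.single (p.1 + 1, p.2) c := by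
  simp [tX, Finsupp.mapDomain_single]

lemma tY_single (α : k) (p : ℕ × ℕ) (c : k) :
    tY α (Finsupp.single p c) =
      if p.1 = 0 then Finsupp.single (0, p.2 + 1) c
      else (α * c) • Finsupp.single (p.1 - 1, p.2) 1 := by
  simp [tY, Finsupp.linearCombination_single]
  split <;> simp [Finsupp.smul_single, mul_comm, mul_smul]

lemma tYX (α : k) : (tY α) ∘ₗ tX = α • LinearMap.id := by
  apply Finsupp.lhom_ext
  intro p c
  simp [tX_single, tY_single, Finsupp.smul_single, mul_comm]

def tPhi (α : k) : RingQuot (toeplitzRel k α) →ₐ[k] Module.End k (TM k) :=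
  RingQuot.liftAlgHom k ⟨FreeAlgebra.lift k ![tX, tY α], by
    rintro a b ⟨rfl, rfl⟩
    simp only [map_mul, FreeAlgebra.lift_ι_apply, AlgHom.commutes]
    show tY α * tX = _
    have : tY α * tX = (tY α) ∘ₗ tX := rfl
    rw [this, tYX]
    rw [Algebra.algebraMap_eq_smul_one]
    rfl⟩

lemma tPhi_x (α : k) :
    tPhi α (RingQuot.mkAlgHom k (toeplitzRel k α) (FreeAlgebra.ι k 0)) = tX := by
  simp [tPhi, RingQuot.liftAlgHom_mkAlgHom_apply, FreeAlgebra.lift_ι_apply]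

lemma tPhi_y (α : k) :
    tPhi α (RingQuot.mkAlgHom k (toeplitzRel k α) (FreeAlgebra.ι k 1)) = tY α := by
  simp [tPhi, RingQuot.liftAlgHom_mkAlgHom_apply, FreeAlgebra.lift_ι_apply]

lemma tY_pow (α : k) (j : ℕ) :
    ((tY α) ^ j) (Finsupp.single ((0:ℕ), (0:ℕ)) (1:k)) = Finsupp.single (0, j) 1 := by
  induction j with
  | zero => simp
  | succ j ih =>
      rw [pow_succ']
      show tY α (((tY α) ^ j) _) = _
      rw [ih, tY_single]
      simp

lemma tX_pow (i j : ℕ) :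
    (tX ^ i) (Finsupp.single ((0:ℕ), j) (1:k)) = Finsupp.single (i, j) 1 := by
  induction i with
  | zero => simp
  | succ i ih =>
      rw [pow_succ']
      show tX ((tX ^ i) _) = _
      rw [ih, tX_single]

def tV (α : k) (p : ℕ × ℕ) : RingQuot (toeplitzRel k α) :=
  (RingQuot.mkAlgHom k (toeplitzRel k α) (FreeAlgebra.ι k 0)) ^ p.1 *
    (RingQuot.mkAlgHom k (toeplitzRel k α) (FreeAlgebra.ι k 1)) ^ p.2

def tPsi (α : k) : RingQuot (toeplitzRel k α) →ₗ[k] TM k :=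
  (LinearMap.applyₗ (Finsupp.single ((0:ℕ),(0:ℕ)) (1:k))).comp (tPhi α).toLinearMap

lemma tPsi_v (α : k) (p : ℕ × ℕ) : tPsi α (tV α p) = Finsupp.single p 1 := by
  have : tPhi α (tV α p) = tX ^ p.1 * (tY α) ^ p.2 := by
    rw [tV, map_mul, map_pow, map_pow, tPhi_x, tPhi_y]
  show (tPhi α (tV α p)) (Finsupp.single ((0:ℕ),(0:ℕ)) (1:k)) = _
  rw [this]
  show (tX ^ p.1) (((tY α) ^ p.2) _) = _
  rw [tY_pow, tX_pow]

lemma tV_indep (α : k) : LinearIndependent k (tV α) := by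
  apply LinearIndependent.of_comp (tPsi α)
  have h : (tPsi α) ∘ (tV α) = fun p : ℕ × ℕ => Finsupp.single p (1:k) := by
    funext p; exact tPsi_v α p
  rw [h]
  have := (Finsupp.basisSingleOne (R := k) (ι := ℕ × ℕ)).linearIndependent
  simpa [Finsupp.coe_basisSingleOne] using this

lemma tV_mul (α : k) (j i kk l : ℕ) :
    tV α (i, j) * tV α (kk, l) ∈ Submodule.span k (Set.range (tV α)) := by
  induction j generalizing kk with
  | zero =>
      have : tV α (i, 0) * tV α (kk, l) = tV α (i + kk, l) := by
        simp only [tV, pow_zero, mul_one, ← mul_assoc, ← pow_add]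
      rw [this]
      exact Submodule.subset_span ⟨_, rfl⟩
  | succ j ih =>
      cases kk with
      | zero =>
          have : tV α (i, j + 1) * tV α (0, l) = tV α (i, j + 1 + l) := by
            simp only [tV, pow_zero, one_mul, mul_assoc, ← pow_add]
          rw [this]
          exact Submodule.subset_span ⟨_, rfl⟩
      | succ kk =>
          set X := RingQuot.mkAlgHom k (toeplitzRel k α) (FreeAlgebra.ι k 0)
          set Y := RingQuot.mkAlgHom k (toeplitzRel k α) (FreeAlgebra.ι k 1)
          have hyx : Y * X = algebraMap k _ α := by
            have := RingQuot.mkAlgHom_rel k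
              (show toeplitzRel k α (FreeAlgebra.ι k 1 * FreeAlgebra.ι k 0)
                (algebraMap k (FreeAlgebra k (Fin 2)) α) from ⟨rfl, rfl⟩)
            simpa [map_mul, AlgHom.commutes] using this
          have key : tV α (i, j + 1) * tV α (kk + 1, l) =
              α • (tV α (i, j) * tV α (kk, l)) := by
            show X ^ i * Y ^ (j+1) * (X ^ (kk+1) * Y ^ l) =
              α • (X ^ i * Y ^ j * (X ^ kk * Y ^ l))
            rw [pow_succ (a := Y), pow_succ' (a := X)]
            calc X ^ i * (Y ^ j * Y) * (X * X ^ kk * Y ^ l)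
                = X ^ i * Y ^ j * ((Y * X) * (X ^ kk * Y ^ l)) := by
                  simp only [mul_assoc]
              _ = X ^ i * Y ^ j * (α • (X ^ kk * Y ^ l)) := by
                  rw [hyx, ← Algebra.smul_def]
              _ = α • (X ^ i * Y ^ j * (X ^ kk * Y ^ l)) := by
                  rw [mul_smul_comm]
          rw [key]
          exact Submodule.smul_mem _ _ (ih kk)

lemma tV_span (α : k) : ⊤ ≤ Submodule.span k (Set.range (tV α)) := by
  set S := Submodule.span k (Set.range (tV α))
  have hmul : ∀ a b : RingQuot (toeplitzRel k α), a ∈ S → b ∈ S → a * b ∈ S := by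
    intro a b ha hb
    have hSS : S * S ≤ S := by
      rw [Submodule.span_mul_span]
      apply Submodule.span_le.2
      rintro _ ⟨_, ⟨p, rfl⟩, _, ⟨q, rfl⟩, rfl⟩
      exact tV_mul α p.2 p.1 q.1 q.2
    exact hSS (Submodule.mul_mem_mul ha hb)
  intro t _
  obtain ⟨a, rfl⟩ := RingQuot.mkAlgHom_surjective k (toeplitzRel k α) t
  induction a using FreeAlgebra.induction with
  | grade0 r =>
      have h1 : (1 : RingQuot (toeplitzRel k α)) = tV α (0, 0) := by simp [tV]
      have : RingQuot.mkAlgHom k (toeplitzRel k α) (algebraMap k _ r) =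
          r • tV α (0, 0) := by
        rw [AlgHom.commutes, Algebra.algebraMap_eq_smul_one, h1]
      rw [this]
      exact Submodule.smul_mem _ _ (Submodule.subset_span ⟨_, rfl⟩)
  | grade1 i =>
      fin_cases i
      · show RingQuot.mkAlgHom k (toeplitzRel k α) (FreeAlgebra.ι k 0) ∈ S
        have : RingQuot.mkAlgHom k (toeplitzRel k α) (FreeAlgebra.ι k 0) = tV α (1, 0) := by
          simp [tV]
        rw [this]; exact Submodule.subset_span ⟨_, rfl⟩
      · show RingQuot.mkAlgHom k (toeplitzRel k α) (FreeAlgebra.ι k 1) ∈ S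
        have : RingQuot.mkAlgHom k (toeplitzRel k α) (FreeAlgebra.ι k 1) = tV α (0, 1) := by
          simp [tV]
        rw [this]; exact Submodule.subset_span ⟨_, rfl⟩
  | add a b ha hb =>
      rw [map_add]; exact Submodule.add_mem _ (ha trivial) (hb trivial)
  | mul a b ha hb => rw [map_mul]; exact hmul _ _ (ha trivial) (hb trivial)

/-- In `T = k⟨x,y⟩/(yx − α)`, the monomials `x^i y^j` (`i, j ≥ 0`) form a
`k`-module basis. -/
theorem toeplitz_basis {k : Type} [CommRing k] (α : k) :
    ∃ B : Module.Basis (ℕ × ℕ) k (RingQuot (toeplitzRel k α)),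
      ∀ p : ℕ × ℕ,
        B p = (RingQuot.mkAlgHom k (toeplitzRel k α) (FreeAlgebra.ι k 0)) ^ p.1 *
              (RingQuot.mkAlgHom k (toeplitzRel k α) (FreeAlgebra.ι k 1)) ^ p.2 := by
  exact ⟨Module.Basis.mk (tV_indep α) (tV_span α), fun p => by rw [Module.Basis.mk_apply]; rfl⟩

end
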